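/- Let k be a density kernel with rectangular support F × G, and suppose there is κ ≥ 1 with k(s₁,t₁)k(s₂,t₂) ≤ κ² k(s₂,t₁)k(s₁,t₂) for all s₁, s₂ ∈ F and t₁, t₂ ∈ G. Let u, v : S → [0, ∞) be bounded measurable functions with u(t) > 0 for every t ∈ G and sup{v(t)/u(t) : t ∈ G} < ∞, and define u₁(s) = ∫_S k(s,t) u(t) λ(dt) and v₁(s) = ∫_S k(s,t) v(t) λ(dt). Then osc_F(v₁/u₁) ≤ ((κ − 1)/(κ + 1)) · osc_G(v/u), where for a real function w and a set E, osc_E(w) = sup{w(t₁) − w(t₂) : t₁, t₂ ∈ E}. -/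

import Mathlib

open MeasureTheory
open scoped NNReal ENNReal

/-- The oscillation of `w` over a set `E`: `sup {w t₁ - w t₂ : t₁, t₂ ∈ E}`. -/
noncomputable def oscOn {S : Type*} (w : S → ℝ) (E : Set S) : ℝ :=
  sSup {d : ℝ | ∃ t₁ ∈ E, ∃ t₂ ∈ E, d = w t₁ - w t₂}

lemma core_c (κ : ℝ) (hκ : 1 ≤ κ) (a m M : ℝ) (ha : 0 < a) (hmM : m ≤ M) :
    ∃ c, ∀ h r : ℝ, a ≤ h → h ≤ κ ^ 2 * a → m ≤ r → r ≤ M →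
      (h - 1) * (r - c) ≤ (κ - 1) / (κ + 1) * (M - m) := by
  have hκ1 : (0:ℝ) < κ + 1 := by linarith
  set δ := (κ - 1) / (κ + 1) with hδdef
  have hδ0 : 0 ≤ δ := div_nonneg (by linarith) hκ1.le
  have hδκ : δ * (κ ^ 2 - 1) = (κ - 1) ^ 2 := by
    rw [hδdef]; field_simp; ring
  by_cases hA : 1 - a ≤ δ
  · refine ⟨M, fun h r h1 h2 h3 h4 => ?_⟩
    rcases le_or_gt 1 h with hh | hh
    · nlinarith
    · nlinarith [mul_le_mul (by linarith : 1 - h ≤ 1 - a)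
        (by linarith : M - r ≤ M - m) (by linarith : (0:ℝ) ≤ M - r)
        (by linarith : (0:ℝ) ≤ 1 - a)]
  · push_neg at hA
    by_cases hB : κ ^ 2 * a ≤ 1
    · refine ⟨m, fun h r h1 h2 h3 h4 => ?_⟩
      nlinarith
    · push_neg at hB
      have h1a : 0 < 1 - a := by linarith
      set s := δ / (1 - a) with hsdef
      have hs0 : 0 ≤ s := div_nonneg hδ0 h1a.le
      have hs1 : s < 1 := (div_lt_one h1a).mpr hA
      have hs : s * (1 - a) = δ := div_mul_cancel₀ _ h1a.ne'
      refine ⟨m + s * (M - m), fun h r h1 h2 h3 h4 => ?_⟩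
      have hMm : (0:ℝ) ≤ M - m := by linarith
      rcases le_or_gt 1 h with hh | hh
      · have hMc : (0:ℝ) ≤ (1 - s) * (M - m) := mul_nonneg (by linarith) hMm
        have e0 : r - (m + s * (M - m)) ≤ (1 - s) * (M - m) := by nlinarith
        have e1 : (h - 1) * (r - (m + s * (M - m))) ≤ (κ ^ 2 * a - 1) * ((1 - s) * (M - m)) := by
          calc (h - 1) * (r - (m + s * (M - m))) ≤ (h - 1) * ((1 - s) * (M - m)) :=
                mul_le_mul_of_nonneg_left e0 (by linarith)
            _ ≤ (κ ^ 2 * a - 1) * ((1 - s) * (M - m)) :=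
                mul_le_mul_of_nonneg_right (by linarith) hMc
        have key : (κ ^ 2 * a - 1) * (1 - s) ≤ δ := by
          rw [← mul_le_mul_iff_of_pos_right h1a]
          nlinarith [sq_nonneg (κ * a - 1), hδκ, hs]
        calc (h - 1) * (r - (m + s * (M - m))) ≤ (κ ^ 2 * a - 1) * (1 - s) * ((M - m)) := by
              rw [mul_assoc]; exact e1
          _ ≤ δ * (M - m) := mul_le_mul_of_nonneg_right key hMm
      · have e0 : (m + s * (M - m)) - r ≤ s * (M - m) := by nlinarith
        have hsM : (0:ℝ) ≤ s * (M - m) := mul_nonneg hs0 hMm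
        have : (1 - h) * ((m + s * (M - m)) - r) ≤ (1 - a) * (s * (M - m)) := by
          rcases le_or_gt ((m + s * (M - m)) - r) 0 with hcr | hcr
          · nlinarith [mul_nonpos_of_nonneg_of_nonpos (by linarith : (0:ℝ) ≤ 1 - h) hcr,
              mul_nonneg (by linarith : (0:ℝ) ≤ 1 - a) hsM]
          · exact mul_le_mul (by linarith) e0 hcr.le (by linarith)
        nlinarith [hs]


/-- Hopf. If `k` is a density kernel with rectangular support `F × G`
whose cross-ratios are bounded by `κ²`, and `u, v ≥ 0` are bounded measurable with `u > 0`
on `G` and `v/u` bounded on `G`, then for `u₁(s) = ∫ k(s,t)u(t) λ(dt)`,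
`v₁(s) = ∫ k(s,t)v(t) λ(dt)` one has
`osc_F(v₁/u₁) ≤ ((κ−1)/(κ+1)) osc_G(v/u)`. -/
theorem stmt_11 {S : Type*} [MetricSpace S] [CompleteSpace S]
    [TopologicalSpace.SeparableSpace S] [MeasurableSpace S] [BorelSpace S]
    (lam : Measure S) [SigmaFinite lam]
    (k : S → S → ℝ≥0) (hk : Measurable fun p : S × S => k p.1 p.2)
    (hkb : ∃ C : ℝ≥0∞, C < ⊤ ∧ ∀ s, ∫⁻ t, (k s t : ℝ≥0∞) ∂lam ≤ C)
    (F G : Set S) (hFm : MeasurableSet F) (hGm : MeasurableSet G)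
    (hF : 0 < lam F) (hG : 0 < lam G)
    (hpos : ∀ s ∈ F, ∀ t ∈ G, 0 < k s t)
    (hzero : ∀ s t, (s, t) ∉ F ×ˢ G → k s t = 0)
    (κ : ℝ) (hκ : 1 ≤ κ)
    (hcross : ∀ s₁ ∈ F, ∀ s₂ ∈ F, ∀ t₁ ∈ G, ∀ t₂ ∈ G,
      (k s₁ t₁ : ℝ) * (k s₂ t₂ : ℝ) ≤ κ ^ 2 * ((k s₂ t₁ : ℝ) * (k s₁ t₂ : ℝ)))
    (u v : S → ℝ) (hu : Measurable u) (hv : Measurable v)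
    (hub : ∃ C : ℝ, ∀ t, |u t| ≤ C) (hvb : ∃ C : ℝ, ∀ t, |v t| ≤ C)
    (hu0 : ∀ t, 0 ≤ u t) (hv0 : ∀ t, 0 ≤ v t)
    (huG : ∀ t ∈ G, 0 < u t)
    (hrat : ∃ C : ℝ, ∀ t ∈ G, v t / u t ≤ C) :
    oscOn (fun s => (∫ t, (k s t : ℝ) * v t ∂lam) / (∫ t, (k s t : ℝ) * u t ∂lam)) F ≤
      ((κ - 1) / (κ + 1)) * oscOn (fun t => v t / u t) G := by
  obtain ⟨C, hC, hCb⟩ := hkb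
  obtain ⟨Cu, hCu⟩ := hub
  obtain ⟨Cv, hCv⟩ := hvb
  obtain ⟨Cr, hCr⟩ := hrat
  obtain ⟨t₀, ht₀⟩ : G.Nonempty := nonempty_of_measure_ne_zero hG.ne'
  set r : S → ℝ := fun t => v t / u t with hrdef
  have hκ1 : (0:ℝ) < κ + 1 := by linarith
  have hδ0 : (0:ℝ) ≤ (κ - 1) / (κ + 1) := div_nonneg (by linarith) hκ1.le
  have hr0 : ∀ t ∈ G, 0 ≤ r t := fun t ht => div_nonneg (hv0 t) (hu0 t)
  have hGne : (r '' G).Nonempty := ⟨r t₀, t₀, ht₀, rfl⟩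
  set M := sSup (r '' G) with hMdef
  set m := sInf (r '' G) with hmdef
  have hbddA : BddAbove (r '' G) := ⟨Cr, by rintro x ⟨t, ht, rfl⟩; exact hCr t ht⟩
  have hbddB : BddBelow (r '' G) := ⟨0, by rintro x ⟨t, ht, rfl⟩; exact hr0 t ht⟩
  have hrM : ∀ t ∈ G, r t ≤ M := fun t ht => le_csSup hbddA ⟨t, ht, rfl⟩
  have hmr : ∀ t ∈ G, m ≤ r t := fun t ht => csInf_le hbddB ⟨t, ht, rfl⟩
  have hmM : m ≤ M := le_trans (hmr t₀ ht₀) (hrM t₀ ht₀)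
  have hOscBdd : BddAbove {d : ℝ | ∃ t₁ ∈ G, ∃ t₂ ∈ G, d = r t₁ - r t₂} := by
    refine ⟨Cr, ?_⟩
    rintro x ⟨t₁, ht₁, t₂, ht₂, rfl⟩
    have h1 := hCr t₁ ht₁; have h2 := hr0 t₂ ht₂
    simp only [hrdef]
    linarith
  have hOscNe : (0:ℝ) ∈ {d : ℝ | ∃ t₁ ∈ G, ∃ t₂ ∈ G, d = r t₁ - r t₂} :=
    ⟨t₀, ht₀, t₀, ht₀, by ring⟩
  have hosc0 : 0 ≤ oscOn r G := le_csSup hOscBdd hOscNe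
  have hosc_ge : M - m ≤ oscOn r G := by
    have hM : M ≤ oscOn r G + m := by
      apply csSup_le hGne
      rintro x ⟨t₁, ht₁, rfl⟩
      have h1 : r t₁ - oscOn r G ≤ m := by
        apply le_csInf hGne
        rintro x ⟨t₂, ht₂, rfl⟩
        have h2 : r t₁ - r t₂ ≤ oscOn r G := le_csSup hOscBdd ⟨t₁, ht₁, t₂, ht₂, rfl⟩
        linarith
      linarith
    linarith
  have hks : ∀ s, Measurable fun t => (k s t : ℝ) := fun s =>
    (hk.comp (measurable_const.prodMk measurable_id)).coe_nnreal_real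
  have hki : ∀ s, Integrable (fun t => (k s t : ℝ)) lam := by
    intro s
    refine ⟨(hks s).aestronglyMeasurable, ?_⟩
    rw [hasFiniteIntegral_iff_ofNNReal]
    exact lt_of_le_of_lt (hCb s) hC
  have hkw : ∀ (s : S) (w : S → ℝ) (Cw : ℝ), Measurable w → (∀ t, |w t| ≤ Cw) →
      Integrable (fun t => (k s t : ℝ) * w t) lam := by
    intro s w Cw hw hwb
    have h1 : Integrable (fun t => w t * (k s t : ℝ)) lam :=
      (hki s).bdd_mul (c := Cw) hw.aestronglyMeasurable (ae_of_all _ fun t => by simpa using hwb t)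
    simpa [mul_comm] using h1
  have key : ∀ s₁ ∈ F, ∀ s₂ ∈ F,
      (∫ t, (k s₁ t : ℝ) * v t ∂lam) / (∫ t, (k s₁ t : ℝ) * u t ∂lam)
        - (∫ t, (k s₂ t : ℝ) * v t ∂lam) / (∫ t, (k s₂ t : ℝ) * u t ∂lam)
        ≤ (κ - 1) / (κ + 1) * (M - m) := by
    intro s₁ hs₁ s₂ hs₂
    have hz : ∀ s ∈ F, ∀ t, t ∉ G → (k s t : ℝ) = 0 := by
      intro s hs t ht
      rw [hzero s t (by simp [ht])]
      simp
    have hAi : ∀ s, Integrable (fun t => (k s t : ℝ) * u t) lam := fun s => hkw s u Cu hu hCu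
    have hBi : ∀ s, Integrable (fun t => (k s t : ℝ) * v t) lam := fun s => hkw s v Cv hv hCv
    set U₁ := ∫ t, (k s₁ t : ℝ) * u t ∂lam with hU₁def
    set U₂ := ∫ t, (k s₂ t : ℝ) * u t ∂lam with hU₂def
    set V₁ := ∫ t, (k s₁ t : ℝ) * v t ∂lam with hV₁def
    set V₂ := ∫ t, (k s₂ t : ℝ) * v t ∂lam with hV₂def
    have hUpos : ∀ s ∈ F, 0 < ∫ t, (k s t : ℝ) * u t ∂lam := by
      intro s hs
      rw [integral_pos_iff_support_of_nonneg
        (fun t => mul_nonneg (k s t).coe_nonneg (hu0 t)) (hAi s)]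
      refine lt_of_lt_of_le hG (measure_mono ?_)
      intro t ht
      have h1 : (0:ℝ) < k s t := by exact_mod_cast hpos s hs t ht
      have h2 := huG t ht
      simp only [Function.mem_support]
      positivity
    have hU₁ : 0 < U₁ := hUpos s₁ hs₁
    have hU₂ : 0 < U₂ := hUpos s₂ hs₂
    set hfun : S → ℝ := fun t => ((k s₁ t : ℝ) / (k s₂ t : ℝ)) * (U₂ / U₁) with hfdef
    have hfpos : ∀ t ∈ G, 0 < hfun t := by
      intro t ht
      have h1 : (0:ℝ) < k s₁ t := by exact_mod_cast hpos s₁ hs₁ t ht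
      have h2 : (0:ℝ) < k s₂ t := by exact_mod_cast hpos s₂ hs₂ t ht
      exact mul_pos (div_pos h1 h2) (div_pos hU₂ hU₁)
    have hcross' : ∀ t ∈ G, ∀ t' ∈ G, hfun t ≤ κ ^ 2 * hfun t' := by
      intro t ht t' ht'
      have h2t : (0:ℝ) < k s₂ t := by exact_mod_cast hpos s₂ hs₂ t ht
      have h2t' : (0:ℝ) < k s₂ t' := by exact_mod_cast hpos s₂ hs₂ t' ht'
      have hρ : (k s₁ t : ℝ) / (k s₂ t : ℝ) ≤ κ ^ 2 * ((k s₁ t' : ℝ) / (k s₂ t' : ℝ)) := by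
        rw [← mul_div_assoc, div_le_div_iff₀ h2t h2t']
        calc (k s₁ t : ℝ) * (k s₂ t' : ℝ) ≤ κ ^ 2 * ((k s₂ t : ℝ) * (k s₁ t' : ℝ)) :=
              hcross s₁ hs₁ s₂ hs₂ t ht t' ht'
          _ = κ ^ 2 * (k s₁ t' : ℝ) * (k s₂ t : ℝ) := by ring
      calc hfun t = ((k s₁ t : ℝ) / (k s₂ t : ℝ)) * (U₂ / U₁) := rfl
        _ ≤ (κ ^ 2 * ((k s₁ t' : ℝ) / (k s₂ t' : ℝ))) * (U₂ / U₁) :=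
            mul_le_mul_of_nonneg_right hρ (div_nonneg hU₂.le hU₁.le)
        _ = κ ^ 2 * hfun t' := by rw [hfdef]; ring
    set a := sInf (hfun '' G) with hadef
    have hfne : (hfun '' G).Nonempty := ⟨_, t₀, ht₀, rfl⟩
    have hfbdd : BddBelow (hfun '' G) := ⟨0, by rintro x ⟨t, ht, rfl⟩; exact (hfpos t ht).le⟩
    have ha_le : ∀ t ∈ G, a ≤ hfun t := fun t ht => csInf_le hfbdd ⟨t, ht, rfl⟩
    have hκ2 : (0:ℝ) < κ ^ 2 := by positivity
    have hle_a : ∀ t ∈ G, hfun t ≤ κ ^ 2 * a := by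
      intro t ht
      have hb : hfun t / κ ^ 2 ≤ a := by
        apply le_csInf hfne
        rintro x ⟨t', ht', rfl⟩
        rw [div_le_iff₀ hκ2]
        calc hfun t ≤ κ ^ 2 * hfun t' := hcross' t ht t' ht'
          _ = hfun t' * κ ^ 2 := by ring
      calc hfun t = hfun t / κ ^ 2 * κ ^ 2 := by field_simp
        _ ≤ a * κ ^ 2 := mul_le_mul_of_nonneg_right hb hκ2.le
        _ = κ ^ 2 * a := by ring
    have ha0 : 0 < a := by
      have h1 := hle_a t₀ ht₀
      have h2 := hfpos t₀ ht₀
      nlinarith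
    obtain ⟨c, hc⟩ := core_c κ hκ a m M ha0 hmM
    have master : ∀ t, (k s₁ t : ℝ) * v t / U₁ - (k s₂ t : ℝ) * v t / U₂
        - c * ((k s₁ t : ℝ) * u t / U₁ - (k s₂ t : ℝ) * u t / U₂)
        ≤ (κ - 1) / (κ + 1) * (M - m) * ((k s₂ t : ℝ) * u t / U₂) := by
      intro t
      by_cases ht : t ∈ G
      · have hk₁ : (0:ℝ) < k s₁ t := by exact_mod_cast hpos s₁ hs₁ t ht
        have hk₂ : (0:ℝ) < k s₂ t := by exact_mod_cast hpos s₂ hs₂ t ht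
        have hut : 0 < u t := huG t ht
        set p := (k s₁ t : ℝ) * u t / U₁ with hpdef
        set q := (k s₂ t : ℝ) * u t / U₂ with hqdef
        have hq : 0 < q := by rw [hqdef]; positivity
        have hrt : r t = v t / u t := rfl
        have hpq : p / q = hfun t := by
          rw [hpdef, hqdef, hfdef]
          field_simp
        have hcc := hc (hfun t) (r t) (ha_le t ht) (hle_a t ht) (hmr t ht) (hrM t ht)
        have h2 : (p - q) * (r t - c) ≤ (κ - 1) / (κ + 1) * (M - m) * q := by
          have e : (p - q) * (r t - c) = (p / q - 1) * (r t - c) * q := by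
            field_simp
          rw [e, hpq]
          exact mul_le_mul_of_nonneg_right hcc hq.le
        have hv₁ : (k s₁ t : ℝ) * v t / U₁ = p * r t := by
          rw [hpdef, hrt]
          field_simp
        have hv₂ : (k s₂ t : ℝ) * v t / U₂ = q * r t := by
          rw [hqdef, hrt]
          field_simp
        rw [hv₁, hv₂]
        have e2 : p * r t - q * r t - c * (p - q) = (p - q) * (r t - c) := by ring
        linarith [h2, e2.le, e2.ge]
      · have h1 : (k s₁ t : ℝ) = 0 := hz s₁ hs₁ t ht
        have h2 : (k s₂ t : ℝ) = 0 := hz s₂ hs₂ t ht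
        simp [h1, h2]
    have hIL : Integrable (fun t => (k s₁ t : ℝ) * v t / U₁ - (k s₂ t : ℝ) * v t / U₂
        - c * ((k s₁ t : ℝ) * u t / U₁ - (k s₂ t : ℝ) * u t / U₂)) lam :=
      (((hBi s₁).div_const U₁).sub ((hBi s₂).div_const U₂)).sub
        ((((hAi s₁).div_const U₁).sub ((hAi s₂).div_const U₂)).const_mul c)
    have hIR : Integrable (fun t => (κ - 1) / (κ + 1) * (M - m) * ((k s₂ t : ℝ) * u t / U₂)) lam :=
      ((hAi s₂).div_const U₂).const_mul _
    have hmono := integral_mono hIL hIR master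
    have eL : (∫ t, ((k s₁ t : ℝ) * v t / U₁ - (k s₂ t : ℝ) * v t / U₂
        - c * ((k s₁ t : ℝ) * u t / U₁ - (k s₂ t : ℝ) * u t / U₂)) ∂lam)
        = V₁ / U₁ - V₂ / U₂ - c * (U₁ / U₁ - U₂ / U₂) := by
      have j1 : Integrable (fun t => (k s₁ t : ℝ) * v t / U₁ - (k s₂ t : ℝ) * v t / U₂) lam :=
        ((hBi s₁).div_const U₁).sub ((hBi s₂).div_const U₂)
      have j2 : Integrable (fun t => (k s₁ t : ℝ) * u t / U₁ - (k s₂ t : ℝ) * u t / U₂) lam :=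
        ((hAi s₁).div_const U₁).sub ((hAi s₂).div_const U₂)
      have jb1 : Integrable (fun t => (k s₁ t : ℝ) * v t / U₁) lam := (hBi s₁).div_const U₁
      have jb2 : Integrable (fun t => (k s₂ t : ℝ) * v t / U₂) lam := (hBi s₂).div_const U₂
      have ja1 : Integrable (fun t => (k s₁ t : ℝ) * u t / U₁) lam := (hAi s₁).div_const U₁
      have ja2 : Integrable (fun t => (k s₂ t : ℝ) * u t / U₂) lam := (hAi s₂).div_const U₂
      rw [integral_sub j1 (j2.const_mul c), integral_sub jb1 jb2, integral_const_mul,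
        integral_sub ja1 ja2, integral_div, integral_div, integral_div, integral_div]
    have eR : (∫ t, ((κ - 1) / (κ + 1) * (M - m) * ((k s₂ t : ℝ) * u t / U₂)) ∂lam)
        = (κ - 1) / (κ + 1) * (M - m) := by
      rw [integral_const_mul, integral_div, ← hU₂def, div_self hU₂.ne', mul_one]
    rw [eL, eR, div_self hU₁.ne', div_self hU₂.ne'] at hmono
    simpa using hmono
  show sSup _ ≤ _
  apply Real.sSup_le
  · rintro d ⟨s₁, hs₁, s₂, hs₂, rfl⟩
    calc (∫ t, (k s₁ t : ℝ) * v t ∂lam) / (∫ t, (k s₁ t : ℝ) * u t ∂lam)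
          - (∫ t, (k s₂ t : ℝ) * v t ∂lam) / (∫ t, (k s₂ t : ℝ) * u t ∂lam)
        ≤ (κ - 1) / (κ + 1) * (M - m) := key s₁ hs₁ s₂ hs₂
      _ ≤ (κ - 1) / (κ + 1) * oscOn r G := mul_le_mul_of_nonneg_left hosc_ge hδ0
  · exact mul_nonneg hδ0 hosc0
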